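/- Let k > 0 and define the logistic success probability p(x) = 1/(1 + exp(−k·x)). If C⁺ ≥ (ln 6)/k, then for every x ≥ 0, 1 − p(x + C⁺) ≤ (1/3)·(1 − p(x)). In particular, logistic success probabilities satisfy Assumption 5 (the geometric failure-decay condition) for scores x ≥ 0 whenever the score increment C⁺ is at least (ln 6)/k. -/

import Mathlib

/-- The logistic success probability
`p(x) = 1/(1 + exp(−k·x))` with `k > 0` satisfies the geometric failure-decay
condition (Assumption 5) for scores `x ≥ 0` whenever the score increment
satisfies `C⁺ ≥ (ln 6)/k`. -/
theorem logistic_satisfies_geometric_failure_decay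
    (k Cp : ℝ) (hk : 0 < k) (hCp : Real.log 6 / k ≤ Cp)
    (p : ℝ → ℝ) (hp : ∀ x, p x = 1 / (1 + Real.exp (-(k * x)))) :
    ∀ x : ℝ, 0 ≤ x → 1 - p (x + Cp) ≤ (1/3) * (1 - p x) := by
  intro x hx
  set a := Real.exp (-(k * x)) with ha_def
  set b := Real.exp (-(k * (x + Cp))) with hb_def
  have ha : 0 < a := Real.exp_pos _
  have hb : 0 < b := Real.exp_pos _
  have ha1 : a ≤ 1 := Real.exp_le_one_iff.mpr (by nlinarith)
  have hlog : Real.log 6 ≤ k * Cp := by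
    rw [div_le_iff₀ hk] at hCp; linarith [hCp]
  have hbC : b ≤ a / 6 := by
    have : b = a * Real.exp (-(k * Cp)) := by
      rw [ha_def, hb_def, ← Real.exp_add]; ring_nf
    rw [this]
    have h6 : Real.exp (-(k * Cp)) ≤ 1 / 6 := by
      rw [show (1:ℝ)/6 = Real.exp (-(Real.log 6)) by
        rw [Real.exp_neg, Real.exp_log (by norm_num : (0:ℝ) < 6)]; norm_num]
      exact Real.exp_le_exp.mpr (by linarith)
    nlinarith
  have h1a : 0 < 1 + a := by linarith
  have h1b : 0 < 1 + b := by linarith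
  rw [hp, hp]
  have e1 : 1 - 1 / (1 + b) = b / (1 + b) := by field_simp; ring
  have e2 : 1 - 1 / (1 + a) = a / (1 + a) := by field_simp; ring
  rw [e1, e2, show (1:ℝ)/3 * (a / (1 + a)) = a / (3 * (1 + a)) by rw [eq_div_iff (by positivity)]; field_simp,
    div_le_div_iff₀ h1b (by linarith)]
  nlinarith
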